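/- Let r be a positive integer, 0 ≤ T < 2^r, and let d > 1 be an odd integer with gcd(d,ab)=1. If 1 ≤ T < 2^r with ν₂(T) = t, then d is (T, 2^r)-good with respect to (a,b) if and only if ν₂(ord_p(a·b⁻¹)) = t+1 for every prime p dividing d. If T = 0, then d is (0, 2^r)-good with respect to (a,b) if and only if there exists α ≥ r+1 with ν₂(ord_p(a·b⁻¹)) = α for every prime p dividing d. -/

import Mathlib

lemma aux_ord_pos {p : ℕ} [Fact p.Prime] {u : ZMod p} (hu : u ≠ 0) : 0 < orderOf u := by
  obtain ⟨v, rfl⟩ := hu.isUnit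
  rw [orderOf_units]
  exact orderOf_pos v

lemma aux_pow_eq_neg_one_iff {p : ℕ} [Fact p.Prime] (hp2 : p ≠ 2) {u : ZMod p} (hu : u ≠ 0)
    (n : ℕ) : u ^ n = -1 ↔ orderOf u ∣ 2 * n ∧ ¬ orderOf u ∣ n := by
  have hp : p.Prime := Fact.out
  haveI : Fact (2 < p) := ⟨lt_of_le_of_ne hp.two_le (Ne.symm hp2)⟩
  have hne : (-1 : ZMod p) ≠ 1 := ZMod.neg_one_ne_one
  constructor
  · intro h
    constructor
    · rw [orderOf_dvd_iff_pow_eq_one, mul_comm, pow_mul, h, neg_one_sq]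
    · rw [orderOf_dvd_iff_pow_eq_one, h]
      exact hne
  · rintro ⟨h1, h2⟩
    rw [orderOf_dvd_iff_pow_eq_one, mul_comm, pow_mul, sq] at h1
    rw [orderOf_dvd_iff_pow_eq_one] at h2
    rcases mul_self_eq_one_iff.mp h1 with h | h
    · exact absurd h h2
    · exact h

lemma aux_dvd_iff {p : ℕ} [Fact p.Prime] {a b : ℤ} (hpb : ¬ (p:ℤ) ∣ b) (n : ℕ) :
    (p:ℤ) ∣ a ^ n + b ^ n ↔ ((a : ZMod p) * (b : ZMod p)⁻¹) ^ n = -1 := by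
  have hb0 : (b : ZMod p) ≠ 0 := by
    rwa [Ne, ZMod.intCast_zmod_eq_zero_iff_dvd]
  have hbn : ((b : ZMod p)) ^ n ≠ 0 := pow_ne_zero _ hb0
  rw [← ZMod.intCast_zmod_eq_zero_iff_dvd]
  push_cast
  rw [mul_pow, inv_pow]
  constructor
  · intro h
    have : ((a:ZMod p))^n = -((b:ZMod p))^n := by linear_combination h
    rw [this]
    field_simp
  · intro h
    have : ((a:ZMod p))^n = -1 * ((b:ZMod p))^n := by
      rw [← h]
      field_simp
    rw [this]
    ring

lemma aux_val_eq {m n : ℕ} (hn : 0 < n) (hm : 0 < m) (h1 : m ∣ 2 * n) (h2 : ¬ m ∣ n) :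
    padicValNat 2 m = padicValNat 2 n + 1 := by
  haveI : Fact (Nat.Prime 2) := ⟨Nat.prime_two⟩
  set α := padicValNat 2 m with hα
  set c := ordCompl[2] m with hc
  have hmsplit : 2 ^ α * c = m := by
    rw [hα, ← Nat.factorization_def m Nat.prime_two, hc]
    exact Nat.ordProj_mul_ordCompl_eq_self m 2
  have hcodd : ¬ 2 ∣ c := Nat.not_dvd_ordCompl Nat.prime_two hm.ne'
  have hcop : Nat.Coprime 2 c := (Nat.Prime.coprime_iff_not_dvd Nat.prime_two).mpr hcodd
  have hcn : c ∣ n := by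
    have : c ∣ 2 * n := dvd_trans (Dvd.intro_left _ hmsplit) h1
    exact (Nat.Coprime.dvd_of_dvd_mul_left hcop.symm) this
  have hle : α ≤ padicValNat 2 n + 1 := by
    have hpow : 2 ^ α ∣ 2 * n := dvd_trans (Dvd.intro _ hmsplit) h1
    have h2n : padicValNat 2 (2 * n) = padicValNat 2 n + 1 := by
      rw [padicValNat.mul (by norm_num) hn.ne', padicValNat.self (by norm_num)]
      omega
    have := (padicValNat_dvd_iff_le (p := 2) (by positivity : 2 * n ≠ 0)).mp hpow
    omega
  have hnle : ¬ α ≤ padicValNat 2 n := by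
    intro hcon
    apply h2
    rw [← hmsplit]
    refine (Nat.Coprime.pow_left _ hcop).mul_dvd_of_dvd_of_dvd ?_ hcn
    exact dvd_trans (pow_dvd_pow 2 hcon) pow_padicValNat_dvd
  omega

lemma aux_good {a b : ℤ} {d : ℕ} (hd0 : d ≠ 0) (hd : Odd d)
    (hpa : ∀ p ∈ d.primeFactors, ¬ (p:ℤ) ∣ a)
    {n0 : ℕ}
    (hdiv : ∀ p ∈ d.primeFactors, (p:ℤ) ∣ a ^ n0 + b ^ n0)
    {k : ℕ} (hk : Odd k) (hdk : d ∣ k) :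
    (d : ℤ) ∣ a ^ (n0 * k) + b ^ (n0 * k) := by
  by_cases hz0 : a ^ (n0 * k) + b ^ (n0 * k) = 0
  · rw [hz0]; exact dvd_zero _
  set z := a ^ (n0 * k) + b ^ (n0 * k) with hz
  have hm0 : z.natAbs ≠ 0 := fun h => hz0 (Int.natAbs_eq_zero.mp h)
  have key : d ∣ z.natAbs := by
    apply (Nat.factorization_le_iff_dvd hd0 hm0).mp
    rw [Finsupp.le_def]
    intro p
    by_cases hp : p ∈ d.primeFactors
    · have hp' : p.Prime := Nat.prime_of_mem_primeFactors hp
      have hpd : p ∣ d := Nat.dvd_of_mem_primeFactors hp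
      have hp2 : p ≠ 2 := by
        rintro rfl
        exact (Nat.not_even_iff_odd.mpr hd) ((even_iff_two_dvd).mpr hpd)
      have hpodd : Odd p := hp'.odd_of_ne_two hp2
      set e := d.factorization p with he
      have hx : ¬ (p:ℤ) ∣ a ^ n0 := by
        intro h
        exact hpa p hp ((Nat.prime_iff_prime_int.mp hp').dvd_of_dvd_pow h)
      have lte := Int.emultiplicity_pow_add_pow hp' hpodd (hdiv p hp) hx hk
      have hpk : p ^ e ∣ k := dvd_trans (Nat.ordProj_dvd d p) hdk
      have hbound : (e : ℕ∞) ≤ emultiplicity ((p : ℤ)) ((a^n0)^k + (b^n0)^k) := by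
        rw [lte]
        calc (e : ℕ∞) ≤ emultiplicity p k := le_emultiplicity_of_pow_dvd hpk
          _ ≤ emultiplicity ((p:ℤ)) (a^n0 + b^n0) + emultiplicity p k := le_add_self
      have hdvd : (p:ℤ) ^ e ∣ z := by
        rw [hz, pow_mul, pow_mul]
        exact pow_dvd_of_le_emultiplicity hbound
      have : (p ^ e : ℕ) ∣ z.natAbs := Int.natCast_dvd.mp (by push_cast; exact hdvd)
      exact (Nat.Prime.pow_dvd_iff_le_factorization hp' hm0).mp this
    · have : d.factorization p = 0 := by
        rw [← Finsupp.notMem_support_iff, Nat.support_factorization]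
        exact hp
      simp [this]
  exact Int.natCast_dvd.mpr key

lemma aux_prime_facts {d : ℕ} (hd : Odd d) {a b : ℤ} (hdab : IsCoprime (d : ℤ) (a * b))
    {p : ℕ} (hp : p ∈ d.primeFactors) :
    p.Prime ∧ p ≠ 2 ∧ ¬ (p:ℤ) ∣ a ∧ ¬ (p:ℤ) ∣ b := by
  have hp' : p.Prime := Nat.prime_of_mem_primeFactors hp
  have hpd : p ∣ d := Nat.dvd_of_mem_primeFactors hp
  have hp2 : p ≠ 2 := by
    rintro rfl
    exact (Nat.not_even_iff_odd.mpr hd) ((even_iff_two_dvd).mpr hpd)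
  have hcop : IsCoprime ((p:ℤ)) (a * b) :=
    IsCoprime.of_isCoprime_of_dvd_left hdab (Int.natCast_dvd_natCast.mpr hpd)
  have hnu : ¬ IsUnit ((p:ℤ)) := by
    rw [Int.isUnit_iff]
    have := hp'.two_le
    omega
  have hpab : ¬ (p:ℤ) ∣ a * b := fun h => hnu (hcop.isUnit_of_dvd' dvd_rfl h)
  exact ⟨hp', hp2, fun h => hpab (h.mul_right b), fun h => hpab (h.mul_left a)⟩

lemma aux_base {a b : ℤ} {d : ℕ} (hd : Odd d) (hdab : IsCoprime (d : ℤ) (a * b))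
    {β : ℕ} (hβ : 1 ≤ β)
    (hval : ∀ p ∈ d.primeFactors,
      padicValNat 2 (orderOf ((a : ZMod p) * (b : ZMod p)⁻¹)) = β) :
    ∃ M : ℕ, Odd M ∧
      ∀ p ∈ d.primeFactors, (p:ℤ) ∣ a ^ (2^(β-1) * M) + b ^ (2^(β-1) * M) := by
  classical
  set M := ∏ p ∈ d.primeFactors, ordCompl[2] (orderOf ((a : ZMod p) * (b : ZMod p)⁻¹)) with hM
  have hω : ∀ p ∈ d.primeFactors, 0 < orderOf ((a : ZMod p) * (b : ZMod p)⁻¹) := by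
    intro p hp
    obtain ⟨hp', hp2, hpa, hpb⟩ := aux_prime_facts hd hdab hp
    haveI : Fact p.Prime := ⟨hp'⟩
    have ha0 : (a : ZMod p) ≠ 0 := by rwa [Ne, ZMod.intCast_zmod_eq_zero_iff_dvd]
    have hb0 : (b : ZMod p) ≠ 0 := by rwa [Ne, ZMod.intCast_zmod_eq_zero_iff_dvd]
    exact aux_ord_pos (mul_ne_zero ha0 (inv_ne_zero hb0))
  have hModd : Odd M := by
    rw [← Nat.not_even_iff_odd, even_iff_two_dvd, hM]
    intro h
    obtain ⟨p, hp, hdvd⟩ := (Nat.prime_two.prime.dvd_finset_prod_iff _).mp h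
    exact Nat.not_dvd_ordCompl Nat.prime_two (hω p hp).ne' hdvd
  refine ⟨M, hModd, fun p hp => ?_⟩
  obtain ⟨hp', hp2, hpa, hpb⟩ := aux_prime_facts hd hdab hp
  haveI : Fact p.Prime := ⟨hp'⟩
  have ha0 : (a : ZMod p) ≠ 0 := by rwa [Ne, ZMod.intCast_zmod_eq_zero_iff_dvd]
  have hb0 : (b : ZMod p) ≠ 0 := by rwa [Ne, ZMod.intCast_zmod_eq_zero_iff_dvd]
  set u := (a : ZMod p) * (b : ZMod p)⁻¹ with hu
  have hu0 : u ≠ 0 := mul_ne_zero ha0 (inv_ne_zero hb0)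
  set ω := orderOf u with hωdef
  set c := ordCompl[2] ω with hc
  have hsplit : 2 ^ β * c = ω := by
    rw [hc, ← hval p hp, ← Nat.factorization_def ω Nat.prime_two]
    exact Nat.ordProj_mul_ordCompl_eq_self ω 2
  have hcM : c ∣ M := Finset.dvd_prod_of_mem _ hp
  have h2β : (2:ℕ) * (2 ^ (β - 1) * M) = 2 ^ β * M := by
    rw [← mul_assoc, ← pow_succ']
    congr 2
    omega
  rw [aux_dvd_iff hpb]
  rw [aux_pow_eq_neg_one_iff hp2 hu0]
  constructor
  · rw [h2β, ← hωdef, ← hsplit]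
    exact mul_dvd_mul_left _ hcM
  · intro hdvd
    have h2pow : 2 ^ β ∣ 2 ^ (β - 1) * M := dvd_trans (Dvd.intro _ hsplit) hdvd
    have : (2:ℕ) ∣ M := by
      have hrw : 2 ^ β = 2 ^ (β - 1) * 2 := by
        rw [← pow_succ]
        congr 1
        omega
      rw [hrw] at h2pow
      exact (Nat.mul_dvd_mul_iff_left (pow_pos (by norm_num) (β - 1))).mp h2pow
    exact (Nat.not_even_iff_odd.mpr hModd) ((even_iff_two_dvd).mpr this)

lemma aux_forward {a b : ℤ} {d : ℕ} (hd : Odd d) (hdab : IsCoprime (d : ℤ) (a * b))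
    {N : ℕ} (hN : 0 < N) (hdvd : (d : ℤ) ∣ a ^ N + b ^ N)
    {p : ℕ} (hp : p ∈ d.primeFactors) :
    padicValNat 2 (orderOf ((a : ZMod p) * (b : ZMod p)⁻¹)) = padicValNat 2 N + 1 := by
  obtain ⟨hp', hp2, hpa, hpb⟩ := aux_prime_facts hd hdab hp
  haveI : Fact p.Prime := ⟨hp'⟩
  have hpdvd : (p:ℤ) ∣ a ^ N + b ^ N :=
    dvd_trans (Int.natCast_dvd_natCast.mpr (Nat.dvd_of_mem_primeFactors hp)) hdvd
  have hb0 : (b : ZMod p) ≠ 0 := by rwa [Ne, ZMod.intCast_zmod_eq_zero_iff_dvd]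
  have ha0 : (a : ZMod p) ≠ 0 := by rwa [Ne, ZMod.intCast_zmod_eq_zero_iff_dvd]
  have hu0 : ((a : ZMod p) * (b : ZMod p)⁻¹) ≠ 0 := mul_ne_zero ha0 (inv_ne_zero hb0)
  have h := (aux_dvd_iff hpb N).mp hpdvd
  obtain ⟨h1, h2⟩ := (aux_pow_eq_neg_one_iff hp2 hu0 N).mp h
  exact aux_val_eq hN (aux_ord_pos hu0) h1 h2

/-- characterization of odd `(T, 2^r)`-good integers w.r.t. `(a,b)`:
for `1 ≤ T < 2^r` with `ν₂(T) = t`, goodness holds iff `ν₂(ord_p(a·b⁻¹)) = t + 1`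
for every prime `p ∣ d`; for `T = 0`, goodness holds iff there is `α ≥ r + 1` with
`ν₂(ord_p(a·b⁻¹)) = α` for every prime `p ∣ d`. -/
theorem stmt_19 (a b : ℤ) (ha : a ≠ 0) (hb : b ≠ 0) (hab : IsCoprime a b)
    (r : ℕ) (hr : 0 < r) (T : ℕ) (hT : T < 2 ^ r)
    (d : ℕ) (hd1 : 1 < d) (hd : Odd d) (hdab : IsCoprime (d : ℤ) (a * b)) :
    ((1 ≤ T) →
      ((∃ s : ℕ, 0 < s ∧ (d : ℤ) ∣ a ^ (2 ^ r * s + T) + b ^ (2 ^ r * s + T)) ↔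
        ∀ p ∈ d.primeFactors,
          padicValNat 2 (orderOf ((a : ZMod p) * (b : ZMod p)⁻¹)) =
            padicValNat 2 T + 1)) ∧
    (T = 0 →
      ((∃ s : ℕ, 0 < s ∧ (d : ℤ) ∣ a ^ (2 ^ r * s) + b ^ (2 ^ r * s)) ↔
        ∃ α : ℕ, r + 1 ≤ α ∧ ∀ p ∈ d.primeFactors,
          padicValNat 2 (orderOf ((a : ZMod p) * (b : ZMod p)⁻¹)) = α)) := by
  haveI : Fact (Nat.Prime 2) := ⟨Nat.prime_two⟩
  have hd0 : d ≠ 0 := by omega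
  have hpa : ∀ p ∈ d.primeFactors, ¬ (p:ℤ) ∣ a :=
    fun p hp => (aux_prime_facts hd hdab hp).2.2.1
  constructor
  · intro hT1
    set t := padicValNat 2 T with ht
    have htT : 2 ^ t ∣ T := pow_padicValNat_dvd
    have htr : t < r := by
      have h1 : 2 ^ t ≤ T := Nat.le_of_dvd (by omega) htT
      have h2 : (2:ℕ) ^ t < 2 ^ r := lt_of_le_of_lt h1 hT
      exact (Nat.pow_lt_pow_iff_right (by norm_num)).mp h2
    constructor
    · rintro ⟨s, hs, hdvd⟩ p hp
      have hN0 : 0 < 2 ^ r * s + T := by positivity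
      have hNval : padicValNat 2 (2 ^ r * s + T) = t := by
        have hdvd1 : 2 ^ t ∣ 2 ^ r * s + T :=
          dvd_add (Dvd.dvd.mul_right (pow_dvd_pow 2 htr.le) s) htT
        have hndvd : ¬ 2 ^ (t + 1) ∣ 2 ^ r * s + T := by
          intro h
          have h2 : 2 ^ (t + 1) ∣ 2 ^ r * s := Dvd.dvd.mul_right (pow_dvd_pow 2 (by omega)) s
          have h3 : 2 ^ (t + 1) ∣ T := by
            have := Nat.dvd_sub h h2
            rwa [Nat.add_sub_cancel_left] at this
          exact pow_succ_padicValNat_not_dvd (p := 2) (by omega : T ≠ 0) h3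
        have hle := (padicValNat_dvd_iff_le (p := 2) hN0.ne').mp hdvd1
        have hlt : ¬ (t + 1 ≤ padicValNat 2 (2 ^ r * s + T)) := by
          intro hcon
          exact hndvd ((padicValNat_dvd_iff_le (p := 2) hN0.ne').mpr hcon)
        omega
      have := aux_forward hd hdab hN0 hdvd hp
      rwa [hNval] at this
    · intro hval
      obtain ⟨M, hModd, hMdiv⟩ := aux_base hd hdab (by omega : 1 ≤ t + 1) hval
      simp only [Nat.add_sub_cancel] at hMdiv
      have hMpos : 0 < M := by rcases hModd with ⟨c, hc⟩; omega
      set T' := ordCompl[2] T with hT'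
      have hTsplit : 2 ^ t * T' = T := by
        rw [hT', ht, ← Nat.factorization_def T Nat.prime_two]
        exact Nat.ordProj_mul_ordCompl_eq_self T 2
      have hT'odd : ¬ 2 ∣ T' := Nat.not_dvd_ordCompl Nat.prime_two (by omega)
      have hT'T : T' ≤ T := Nat.le_of_dvd (by omega) (Nat.ordCompl_dvd T 2)
      set m2 := 2 ^ (r - t) with hm2
      haveI : NeZero m2 := ⟨(pow_pos two_pos _).ne'⟩
      have hm2two : (2:ℕ) ∣ m2 := dvd_pow dvd_rfl (by omega)
      have hm2ge : 2 ≤ m2 := Nat.le_of_dvd (pow_pos two_pos _) hm2two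
      have hdModd : Odd (d * M) := hd.mul hModd
      have hunit : IsUnit ((d * M : ℕ) : ZMod m2) := by
        rw [ZMod.isUnit_iff_coprime, hm2]
        apply Nat.Coprime.pow_right
        exact ((Nat.Prime.coprime_iff_not_dvd Nat.prime_two).mpr
          (fun h => (Nat.not_even_iff_odd.mpr hdModd) (even_iff_two_dvd.mpr h))).symm
      set x := (((d * M : ℕ) : ZMod m2))⁻¹ * ((T' : ℕ) : ZMod m2) with hx
      set j0 := x.val with hj0
      set j := j0 + m2 * (T + 1) with hj
      have hj0cast : ((j0 : ℕ) : ZMod m2) = x := ZMod.natCast_rightInverse x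
      have hcong : (d * M * j) ≡ T' [MOD m2] := by
        apply (ZMod.natCast_eq_natCast_iff _ _ _).mp
        calc ((d * M * j : ℕ) : ZMod m2)
            = ((d * M : ℕ) : ZMod m2) * ((j : ℕ) : ZMod m2) := by push_cast; ring
          _ = ((d * M : ℕ) : ZMod m2) * x := by
              rw [hj]
              push_cast
              rw [ZMod.natCast_self, hj0cast]
              ring
          _ = ((T' : ℕ) : ZMod m2) := by
              rw [hx, ← mul_assoc, ZMod.mul_inv_of_unit _ hunit, one_mul]
      have hjodd : Odd j := by
        have h2 : (d * M * j) ≡ T' [MOD 2] := Nat.ModEq.of_dvd hm2two hcong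
        have hT'o : T' % 2 = 1 := Nat.odd_iff.mp (Nat.not_even_iff_odd.mp
          (fun he => hT'odd (even_iff_two_dvd.mp he)))
        have : (d * M * j) % 2 = 1 := by
          unfold Nat.ModEq at h2
          omega
        have hodd : Odd (d * M * j) := Nat.odd_iff.mpr this
        exact ((Nat.odd_mul.mp hodd)).2
      have hjge : m2 * (T + 1) ≤ j := by omega
      have hjbig : T' < d * M * j := by
        have h1 : j ≤ d * M * j := Nat.le_mul_of_pos_left j (by positivity)
        have h2 : 2 * (T + 1) ≤ m2 * (T + 1) := Nat.mul_le_mul_right _ hm2ge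
        omega
      obtain ⟨w, hw⟩ := (Nat.modEq_iff_dvd' hjbig.le).mp hcong.symm
      have hdMj : d * M * j = T' + m2 * w := by omega
      have hwpos : 0 < w := by
        rcases Nat.eq_zero_or_pos w with rfl | h
        · omega
        · exact h
      have hpow : 2 ^ t * m2 = 2 ^ r := by
        rw [hm2, ← pow_add]
        congr 1
        omega
      have hNe : 2 ^ r * w + T = (2 ^ t * M) * (d * j) := by
        calc 2 ^ r * w + T = 2 ^ t * m2 * w + 2 ^ t * T' := by rw [hpow, hTsplit]
          _ = 2 ^ t * (T' + m2 * w) := by ring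
          _ = 2 ^ t * (d * M * j) := by rw [hdMj]
          _ = (2 ^ t * M) * (d * j) := by ring
      refine ⟨w, hwpos, ?_⟩
      rw [hNe]
      exact aux_good hd0 hd hpa hMdiv (hd.mul hjodd) ⟨j, rfl⟩
  · rintro rfl
    constructor
    · rintro ⟨s, hs, hdvd⟩
      have hN0 : 0 < 2 ^ r * s := by positivity
      refine ⟨padicValNat 2 (2 ^ r * s) + 1, ?_, ?_⟩
      · have hrle : r ≤ padicValNat 2 (2 ^ r * s) :=
          (padicValNat_dvd_iff_le (p := 2) hN0.ne').mp (Dvd.intro s rfl)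
        omega
      · intro p hp
        exact aux_forward hd hdab hN0 hdvd hp
    · rintro ⟨α, hα, hval⟩
      obtain ⟨M, hModd, hMdiv⟩ := aux_base hd hdab (by omega : 1 ≤ α) hval
      have hMpos : 0 < M := by rcases hModd with ⟨c, hc⟩; omega
      refine ⟨2 ^ (α - 1 - r) * M * d, by positivity, ?_⟩
      have hNe : 2 ^ r * (2 ^ (α - 1 - r) * M * d) = (2 ^ (α - 1) * M) * d := by
        rw [← mul_assoc, ← mul_assoc, ← pow_add]
        congr 3
        omega
      rw [hNe]
      exact aux_good hd0 hd hpa hMdiv hd dvd_rfl
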